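/- The sum, over all partitions σ of {1,...,n} into exactly k blocks, of the product over blocks τ of σ of |τ|^{|τ|−1}, equals C(n−1, k−1) · n^{n−k}. -/

import Mathlib

open Finset
open scoped Classical

/-- `σ` is a partition of `{1,...,n}` into exactly `k` (non-empty, pairwise disjoint)
blocks whose union is all of `{1,...,n}`. -/
def IsPartitionInto {n : ℕ} (σ : Finset (Finset (Fin n))) (k : ℕ) : Prop :=
  (∀ τ ∈ σ, τ.Nonempty) ∧
  (∀ τ₁ ∈ σ, ∀ τ₂ ∈ σ, τ₁ ≠ τ₂ → Disjoint τ₁ τ₂) ∧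
  σ.biUnion id = univ ∧ σ.card = k

section Aux

open Polynomial


private lemma poly_eq_of_deriv {P Q : Polynomial ℤ}
    (h1 : derivative P = derivative Q) (h2 : P.coeff 0 = Q.coeff 0) : P = Q := by
  have hd : derivative (P - Q) = 0 := by rw [derivative_sub, h1, sub_self]
  have h := Polynomial.eq_C_of_derivative_eq_zero hd
  rw [coeff_sub, h2, sub_self, map_zero] at h
  exact sub_eq_zero.mp h

private lemma nat_choose_aux (m i : ℕ) :
    (m + 1).choose i * (m + 1 - i) = (m + 1) * m.choose i := by
  rw [← Nat.choose_succ_right_eq, Nat.add_one_mul_choose_eq]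

private lemma abel_poly (m : ℕ) :
    ((X + (C ((m:ℤ)+1))) ^ m : Polynomial ℤ)
      = C (((m+1)^m : ℕ) : ℤ)
        + X * ∑ i ∈ range m,
            C ((m.choose i * (i+1)^i : ℕ) : ℤ) * (X + C ((m - i : ℕ) : ℤ)) ^ (m - 1 - i) := by
  induction m with
  | zero => simp
  | succ m IH =>
    apply poly_eq_of_deriv
    · -- derivatives agree
      rw [derivative_X_add_C_pow]
      rw [derivative_add, derivative_C, derivative_mul, derivative_X, zero_add, one_mul,
        derivative_sum]
      have hderiv : ∀ i ∈ range (m+1),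
          derivative (C (((m+1).choose i * (i+1)^i : ℕ) : ℤ)
              * (X + C ((m + 1 - i : ℕ) : ℤ)) ^ (m + 1 - 1 - i))
            = C (((m+1).choose i * (i+1)^i : ℕ) : ℤ) *
                (C ((m - i : ℕ) : ℤ) * (X + C ((m + 1 - i : ℕ) : ℤ)) ^ (m - 1 - i)) := by
        intro i hi
        have e1 : m + 1 - 1 - i = m - i := by omega
        have e2 : m - i - 1 = m - 1 - i := by omega
        rw [derivative_C_mul, derivative_X_add_C_pow, e1, e2]
      rw [Finset.sum_congr rfl hderiv]
      simp only [Nat.cast_succ, Nat.add_sub_cancel]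
      have hcomp : ((X + C ((m:ℤ)+1)) ^ m).comp (X + 1) = (X + C ((m:ℤ)+1+1)) ^ m := by
        simp [add_comp, pow_comp]
        ring_nf
      rw [← hcomp, IH]
      rw [add_comp, C_comp, mul_comp, X_comp, Polynomial.sum_comp]
      have hcomp2 : ∀ i ∈ range m,
          ((C ((m.choose i * (i+1)^i : ℕ) : ℤ) * (X + C ((m - i : ℕ) : ℤ)) ^ (m - 1 - i)).comp (X+1))
            = C ((m.choose i * (i+1)^i : ℕ) : ℤ) * (X + C ((m + 1 - i : ℕ) : ℤ)) ^ (m - 1 - i) := by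
        intro i hi
        have hc : ((m + 1 - i : ℕ) : ℤ) = ((m - i : ℕ) : ℤ) + 1 := by
          have := Finset.mem_range.mp hi; omega
        rw [mul_comp, C_comp, pow_comp, add_comp, X_comp, C_comp, hc, C_add, C_1]
        ring
      rw [Finset.sum_congr rfl hcomp2]
      -- split off the i = m terms of the two sums on the RHS
      rw [Finset.sum_range_succ, Finset.sum_range_succ (f := fun i =>
        C (((m+1).choose i * (i+1)^i : ℕ) : ℤ) *
          (C ((m - i : ℕ) : ℤ) * (X + C ((m + 1 - i : ℕ) : ℤ)) ^ (m - 1 - i)))]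
      simp only [Nat.sub_self, Nat.cast_zero, map_zero, zero_mul, mul_zero, add_zero, pow_zero,
        mul_one, Nat.choose_succ_self_right]
      have hterm : ∀ i ∈ range m,
          C (((m+1).choose i * (i+1)^i : ℕ) : ℤ) * (X + C ((m + 1 - i : ℕ) : ℤ)) ^ (m - i)
            + X * (C (((m+1).choose i * (i+1)^i : ℕ) : ℤ) *
                (C ((m - i : ℕ) : ℤ) * (X + C ((m + 1 - i : ℕ) : ℤ)) ^ (m - 1 - i)))
          = C ((m:ℤ) + 1) * (C ((m.choose i * (i+1)^i : ℕ) : ℤ)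
              * ((X + 1) * (X + C ((m + 1 - i : ℕ) : ℤ)) ^ (m - 1 - i))) := by
        intro i hi
        rw [Finset.mem_range] at hi
        have hpow : (X + C ((m+1-i : ℕ) : ℤ)) ^ (m - i)
            = (X + C ((m+1-i : ℕ) : ℤ)) ^ (m - 1 - i) * (X + C ((m+1-i : ℕ) : ℤ)) := by
          rw [← pow_succ]; congr 1; omega
        rw [hpow]
        have h3n : (m+1) * (m.choose i * (i+1)^i) = ((m+1).choose i * (i+1)^i) * (m+1-i) := by
          rw [← mul_assoc, ← nat_choose_aux m i]; ring
        have h3 : ((m:ℤ) + 1) * ((m.choose i * (i+1)^i : ℕ) : ℤ)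
            = (((m+1).choose i * (i+1)^i : ℕ) : ℤ) * ((m + 1 - i : ℕ) : ℤ) := by
          exact_mod_cast congrArg (Nat.cast (R := ℤ)) h3n
        have h4 : ((m+1-i : ℕ) : ℤ) = ((m - i : ℕ) : ℤ) + 1 := by omega
        have h2 : (C (((m+1).choose i * (i+1)^i : ℕ) : ℤ) : Polynomial ℤ) * (X + C ((m+1-i : ℕ) : ℤ))
            + X * (C (((m+1).choose i * (i+1)^i : ℕ) : ℤ) * C ((m - i : ℕ) : ℤ))
            = C ((m:ℤ) + 1) * C ((m.choose i * (i+1)^i : ℕ) : ℤ) * (X + 1) := by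
          conv_rhs => rw [mul_comm (C ((m:ℤ) + 1)), ← C_mul]
          rw [mul_comm (((m.choose i * (i+1)^i : ℕ) : ℤ)) (((m:ℤ) + 1)), h3, h4, C_mul, C_add, C_1]
          ring
        calc C (((m+1).choose i * (i+1)^i : ℕ) : ℤ)
                * ((X + C ((m + 1 - i : ℕ) : ℤ)) ^ (m - 1 - i) * (X + C ((m + 1 - i : ℕ) : ℤ)))
              + X * (C (((m+1).choose i * (i+1)^i : ℕ) : ℤ) *
                  (C ((m - i : ℕ) : ℤ) * (X + C ((m + 1 - i : ℕ) : ℤ)) ^ (m - 1 - i)))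
            = (C (((m+1).choose i * (i+1)^i : ℕ) : ℤ) * (X + C ((m+1-i : ℕ) : ℤ))
                + X * (C (((m+1).choose i * (i+1)^i : ℕ) : ℤ) * C ((m - i : ℕ) : ℤ)))
                  * (X + C ((m+1-i : ℕ) : ℤ)) ^ (m - 1 - i) := by ring
          _ = _ := by rw [h2]; ring
      have hXsum : X * ∑ i ∈ range m,
            C (((m+1).choose i * (i+1)^i : ℕ) : ℤ) *
                (C ((m - i : ℕ) : ℤ) * (X + C ((m + 1 - i : ℕ) : ℤ)) ^ (m - 1 - i))
          = ∑ i ∈ range m, X * (C (((m+1).choose i * (i+1)^i : ℕ) : ℤ) *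
                (C ((m - i : ℕ) : ℤ) * (X + C ((m + 1 - i : ℕ) : ℤ)) ^ (m - 1 - i))) :=
        Finset.mul_sum _ _ _
      have hsum : ∑ i ∈ range m,
            (C (((m+1).choose i * (i+1)^i : ℕ) : ℤ) * (X + C ((m + 1 - i : ℕ) : ℤ)) ^ (m - i)
              + X * (C (((m+1).choose i * (i+1)^i : ℕ) : ℤ) *
                  (C ((m - i : ℕ) : ℤ) * (X + C ((m + 1 - i : ℕ) : ℤ)) ^ (m - 1 - i))))
          = C ((m:ℤ) + 1) * ((X + 1) * ∑ i ∈ range m,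
              C ((m.choose i * (i+1)^i : ℕ) : ℤ) * (X + C ((m + 1 - i : ℕ) : ℤ)) ^ (m - 1 - i)) := by
        rw [Finset.sum_congr rfl hterm, Finset.mul_sum, Finset.mul_sum]
        exact Finset.sum_congr rfl fun i _ => by ring
      rw [hXsum, add_right_comm, ← Finset.sum_add_distrib, hsum, mul_add]
      have hC : C ((m:ℤ)+1) * C (((m+1)^m : ℕ) : ℤ) = C ((((m+1)*(m+1)^m : ℕ)) : ℤ) := by
        rw [← C_mul]
        norm_cast
      rw [hC, add_comm]
    · -- constant coefficients agree
      rw [coeff_add, mul_coeff_zero, coeff_X_zero, zero_mul, add_zero, coeff_X_add_C_pow,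
        coeff_C]
      norm_num

variable {α : Type*} [Fintype α] [DecidableEq α]

/-- The finset of partitions of `s`. -/
noncomputable def partsOf (s : Finset α) : Finset (Finset (Finset α)) :=
  univ.filter (fun σ => (∀ τ ∈ σ, τ.Nonempty) ∧
    (∀ τ₁ ∈ σ, ∀ τ₂ ∈ σ, τ₁ ≠ τ₂ → Disjoint τ₁ τ₂) ∧ σ.biUnion id = s)

lemma mem_partsOf {s : Finset α} {σ : Finset (Finset α)} :
    σ ∈ partsOf s ↔ (∀ τ ∈ σ, τ.Nonempty) ∧
      (∀ τ₁ ∈ σ, ∀ τ₂ ∈ σ, τ₁ ≠ τ₂ → Disjoint τ₁ τ₂) ∧ σ.biUnion id = s := by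
  simp [partsOf]

lemma block_subset {s : Finset α} {σ : Finset (Finset α)} (hσ : σ ∈ partsOf s)
    {τ : Finset α} (hτ : τ ∈ σ) : τ ⊆ s := by
  rw [mem_partsOf] at hσ
  rw [← hσ.2.2]
  exact subset_biUnion_of_mem id hτ

lemma partsOf_empty : partsOf (∅ : Finset α) = {∅} := by
  ext σ
  simp only [mem_singleton, mem_partsOf]
  constructor
  · rintro ⟨h1, _, h3⟩
    by_contra hne
    obtain ⟨τ, hτ⟩ := Finset.nonempty_iff_ne_empty.mpr hne
    obtain ⟨x, hx⟩ := h1 τ hτ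
    have : x ∈ (∅ : Finset α) := by
      rw [← h3]; exact mem_biUnion.mpr ⟨τ, hτ, hx⟩
    exact absurd this (notMem_empty x)
  · rintro rfl
    refine ⟨by simp, by simp, by simp⟩

lemma exists_unique_block {s : Finset α} {σ : Finset (Finset α)} (hσ : σ ∈ partsOf s)
    {a : α} (ha : a ∈ s) : ∃! τ, τ ∈ σ ∧ a ∈ τ := by
  rw [mem_partsOf] at hσ
  have : a ∈ σ.biUnion id := hσ.2.2 ▸ ha
  obtain ⟨τ, hτ, haτ⟩ := mem_biUnion.mp this
  refine ⟨τ, ⟨hτ, haτ⟩, ?_⟩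
  rintro τ' ⟨hτ', haτ'⟩
  by_contra hne
  exact (Finset.disjoint_left.mp (hσ.2.1 τ' hτ' τ hτ hne)) haτ' haτ

/-- The block of the partition `σ` containing `a`. -/
noncomputable def blockOf (a : α) (σ : Finset (Finset α)) : Finset α :=
  (σ.filter (fun τ => a ∈ τ)).sup id

lemma blockOf_spec {s : Finset α} {σ : Finset (Finset α)} (hσ : σ ∈ partsOf s)
    {a : α} (ha : a ∈ s) :
    blockOf a σ ∈ σ ∧ a ∈ blockOf a σ ∧ ∀ τ ∈ σ, a ∈ τ → τ = blockOf a σ := by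
  obtain ⟨τ₀, ⟨hτ₀, haτ₀⟩, huniq⟩ := exists_unique_block hσ ha
  have hfilter : σ.filter (fun τ => a ∈ τ) = {τ₀} := by
    ext τ
    simp only [mem_filter, mem_singleton]
    constructor
    · rintro ⟨h1, h2⟩; exact huniq τ ⟨h1, h2⟩
    · rintro rfl; exact ⟨hτ₀, haτ₀⟩
  have hb : blockOf a σ = τ₀ := by rw [blockOf, hfilter, sup_singleton, id]
  rw [hb]
  exact ⟨hτ₀, haτ₀, fun τ h1 h2 => huniq τ ⟨h1, h2⟩⟩

/-- Decomposing a partition of `s` by the block containing a fixed element `a ∈ s`. -/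
lemma sum_partsOf {M : Type*} [AddCommMonoid M] (s : Finset α) (a : α) (ha : a ∈ s)
    (f : Finset (Finset α) → M) :
    ∑ σ ∈ partsOf s, f σ
      = ∑ τ ∈ s.powerset.filter (fun τ => a ∈ τ), ∑ σ ∈ partsOf (s \ τ), f (insert τ σ) := by
  rw [Finset.sum_sigma' (s.powerset.filter (fun τ => a ∈ τ)) (fun τ => partsOf (s \ τ))
    (fun τ σ => f (insert τ σ))]
  refine Finset.sum_bij' (fun σ hσ => ⟨blockOf a σ, σ.erase (blockOf a σ)⟩)
    (fun p hp => insert p.1 p.2) ?_ ?_ ?_ ?_ ?_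
  · -- forward map lands in the sigma set
    intro σ hσ
    obtain ⟨hmem, haB, huniq⟩ := blockOf_spec hσ ha
    rw [Finset.mem_sigma]
    constructor
    · simp only [mem_filter, mem_powerset]
      exact ⟨block_subset hσ hmem, haB⟩
    · rw [mem_partsOf] at hσ ⊢
      obtain ⟨h1, h2, h3⟩ := hσ
      refine ⟨fun τ hτ => h1 τ (mem_of_mem_erase hτ),
        fun τ₁ h₁ τ₂ h₂ hne => h2 τ₁ (mem_of_mem_erase h₁) τ₂ (mem_of_mem_erase h₂) hne, ?_⟩
      ext x
      simp only [mem_biUnion, mem_sdiff, id]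
      constructor
      · rintro ⟨τ, hτ, hx⟩
        have hτσ := mem_of_mem_erase hτ
        refine ⟨h3 ▸ mem_biUnion.mpr ⟨τ, hτσ, hx⟩, fun hxB => ?_⟩
        exact (Finset.disjoint_left.mp
          (h2 τ hτσ _ hmem (ne_of_mem_erase hτ))) hx hxB
      · rintro ⟨hxs, hxB⟩
        obtain ⟨τ, hτ, hx⟩ := mem_biUnion.mp (h3 ▸ hxs : x ∈ σ.biUnion id)
        refine ⟨τ, mem_erase.mpr ⟨fun h => hxB (h ▸ hx), hτ⟩, hx⟩
  · -- backward map lands in partitions of s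
    rintro ⟨τ, σ'⟩ hp
    rw [Finset.mem_sigma] at hp
    obtain ⟨hτ, hσ'⟩ := hp
    simp only [mem_filter, mem_powerset] at hτ
    rw [mem_partsOf] at hσ' ⊢
    obtain ⟨h1, h2, h3⟩ := hσ'
    have hsub : ∀ υ ∈ σ', υ ⊆ s \ τ := by
      intro υ hυ
      rw [← h3]; exact subset_biUnion_of_mem id hυ
    refine ⟨?_, ?_, ?_⟩
    · intro υ hυ
      rcases mem_insert.mp hυ with rfl | hυ'
      · exact ⟨a, hτ.2⟩
      · exact h1 υ hυ'
    · intro τ₁ h₁ τ₂ h₂ hne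
      rcases mem_insert.mp h₁ with rfl | h₁' <;> rcases mem_insert.mp h₂ with rfl | h₂'
      · exact absurd rfl hne
      · exact Finset.disjoint_left.mpr fun x hx1 hx2 =>
          (mem_sdiff.mp (hsub τ₂ h₂' hx2)).2 hx1
      · exact Finset.disjoint_left.mpr fun x hx1 hx2 =>
          (mem_sdiff.mp (hsub τ₁ h₁' hx1)).2 hx2
      · exact h2 τ₁ h₁' τ₂ h₂' hne
    · rw [biUnion_insert, h3, id]
      exact Finset.union_sdiff_of_subset hτ.1
  · -- left inverse
    intro σ hσ
    obtain ⟨hmem, _, _⟩ := blockOf_spec hσ ha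
    exact Finset.insert_erase hmem
  · -- right inverse
    rintro ⟨τ, σ'⟩ hp
    rw [Finset.mem_sigma] at hp
    obtain ⟨hτ, hσ'⟩ := hp
    simp only [mem_filter, mem_powerset] at hτ
    have hτnot : τ ∉ σ' := by
      intro hτσ'
      have := block_subset hσ' hτσ'
      exact (mem_sdiff.mp (this hτ.2)).2 hτ.2
    -- the insert is a partition of s; show blockOf picks τ back out
    have hins : insert τ σ' ∈ partsOf s := by
      rw [mem_partsOf] at hσ' ⊢
      obtain ⟨h1, h2, h3⟩ := hσ'
      have hsub : ∀ υ ∈ σ', υ ⊆ s \ τ := by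
        intro υ hυ
        rw [← h3]; exact subset_biUnion_of_mem id hυ
      refine ⟨?_, ?_, ?_⟩
      · intro υ hυ
        rcases mem_insert.mp hυ with rfl | hυ'
        · exact ⟨a, hτ.2⟩
        · exact h1 υ hυ'
      · intro τ₁ h₁ τ₂ h₂ hne
        rcases mem_insert.mp h₁ with rfl | h₁' <;> rcases mem_insert.mp h₂ with rfl | h₂'
        · exact absurd rfl hne
        · exact Finset.disjoint_left.mpr fun x hx1 hx2 =>
            (mem_sdiff.mp (hsub τ₂ h₂' hx2)).2 hx1
        · exact Finset.disjoint_left.mpr fun x hx1 hx2 =>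
            (mem_sdiff.mp (hsub τ₁ h₁' hx1)).2 hx2
        · exact h2 τ₁ h₁' τ₂ h₂' hne
      · rw [biUnion_insert, h3, id]
        exact Finset.union_sdiff_of_subset hτ.1
    obtain ⟨_, _, huniq⟩ := blockOf_spec hins ha
    have hb : blockOf a (insert τ σ') = τ := (huniq τ (mem_insert_self τ σ') hτ.2).symm
    simp only [hb, Finset.erase_insert hτnot]
  · -- values agree
    intro σ hσ
    obtain ⟨hmem, _, _⟩ := blockOf_spec hσ ha
    rw [Finset.insert_erase hmem]

lemma main_poly (s : Finset α) :
    ∑ σ ∈ partsOf s, (X : Polynomial ℤ)^σ.card * C ((∏ τ ∈ σ, τ.card^(τ.card - 1) : ℕ) : ℤ)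
      = if s = ∅ then 1 else X * (X + C ((s.card : ℕ) : ℤ)) ^ (s.card - 1) := by
  induction s using Finset.strongInduction with
  | _ s IH =>
  by_cases hs : s = ∅
  · subst hs
    rw [partsOf_empty, if_pos rfl]
    simp
  · obtain ⟨a, ha⟩ := Finset.nonempty_iff_ne_empty.mpr hs
    set G : ℕ → Polynomial ℤ := fun j => X * C ((j^(j-1) : ℕ) : ℤ) *
      (if s.card - j = 0 then 1
        else X * (X + C ((s.card - j : ℕ) : ℤ)) ^ (s.card - j - 1)) with hG
    rw [if_neg hs, sum_partsOf s a ha]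
    have hinner : ∀ τ ∈ s.powerset.filter (fun τ => a ∈ τ),
        (∑ σ ∈ partsOf (s \ τ), (X : Polynomial ℤ)^(insert τ σ).card
            * C ((∏ υ ∈ insert τ σ, υ.card^(υ.card - 1) : ℕ) : ℤ))
          = G τ.card := by
      intro τ hτ
      simp only [mem_filter, mem_powerset] at hτ
      have hss : s \ τ ⊂ s := Finset.sdiff_ssubset hτ.1 ⟨a, hτ.2⟩
      have hstep : ∀ σ ∈ partsOf (s \ τ),
          (X : Polynomial ℤ)^(insert τ σ).card
              * C ((∏ υ ∈ insert τ σ, υ.card^(υ.card - 1) : ℕ) : ℤ)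
            = X * C ((τ.card^(τ.card - 1) : ℕ) : ℤ)
                * ((X : Polynomial ℤ)^σ.card * C ((∏ υ ∈ σ, υ.card^(υ.card - 1) : ℕ) : ℤ)) := by
        intro σ hσ
        have hτσ : τ ∉ σ := by
          intro h
          have := block_subset hσ h
          exact (mem_sdiff.mp (this hτ.2)).2 hτ.2
        rw [Finset.card_insert_of_notMem hτσ, Finset.prod_insert hτσ, pow_succ,
          Nat.cast_mul, C_mul]
        ring
      rw [Finset.sum_congr rfl hstep, ← Finset.mul_sum, IH (s \ τ) hss]
      have h1 : (s \ τ).card = s.card - τ.card := Finset.card_sdiff_of_subset hτ.1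
      have h2 : (s \ τ = ∅) ↔ (s.card - τ.card = 0) := by
        rw [← Finset.card_eq_zero, h1]
      rw [hG]
      simp only [h1, if_congr h2 rfl rfl]
    rw [Finset.sum_congr rfl hinner]
    -- reindex the subsets containing `a` by erasing `a`
    have hre : ∑ τ ∈ s.powerset.filter (fun τ => a ∈ τ), G τ.card
        = ∑ u ∈ (s.erase a).powerset, G (u.card + 1) := by
      refine Finset.sum_bij' (fun τ _ => τ.erase a) (fun u _ => insert a u) ?_ ?_ ?_ ?_ ?_
      · intro τ hτ
        simp only [mem_filter, mem_powerset] at hτ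
        exact mem_powerset.mpr (Finset.erase_subset_erase a hτ.1)
      · intro u hu
        simp only [mem_powerset] at hu
        refine mem_filter.mpr ⟨mem_powerset.mpr ?_, mem_insert_self a u⟩
        exact Finset.insert_subset ha (hu.trans (Finset.erase_subset a s))
      · intro τ hτ
        simp only [mem_filter, mem_powerset] at hτ
        exact Finset.insert_erase hτ.2
      · intro u hu
        simp only [mem_powerset] at hu
        exact Finset.erase_insert (fun hau => (Finset.mem_erase.mp (hu hau)).1 rfl)
      · intro τ hτ
        simp only [mem_filter, mem_powerset] at hτ
        rw [Finset.card_erase_add_one hτ.2]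
    rw [hre]
    -- group subsets of `s.erase a` by cardinality
    rw [Finset.sum_powerset]
    set m := (s.erase a).card with hm
    have hsm : s.card = m + 1 := by rw [hm, Finset.card_erase_add_one ha]
    have hgroup : ∀ j ∈ range (m + 1),
        ∑ u ∈ Finset.powersetCard j (s.erase a), G (u.card + 1)
          = m.choose j • G (j + 1) := by
      intro j hj
      rw [Finset.sum_congr rfl (fun u hu => by
        rw [(Finset.mem_powersetCard.mp hu).2]),
        Finset.sum_const, Finset.card_powersetCard]
    rw [Finset.sum_congr rfl hgroup]
    -- now use the Abel identity
    have hcast : ((s.card : ℕ) : ℤ) = (m : ℤ) + 1 := by rw [hsm]; push_cast; ring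
    rw [hcast, hsm, Nat.add_sub_cancel, abel_poly m, mul_add, Finset.mul_sum]
    rw [Finset.sum_range_succ]
    have hlast : m.choose m • G (m + 1) = X * C (((m+1)^m : ℕ) : ℤ) := by
      rw [Nat.choose_self, one_smul, hG]
      simp [hsm]
    rw [hlast]
    have hterm : ∀ j ∈ range m,
        m.choose j • G (j + 1)
          = X * (X * (C ((m.choose j * (j+1)^j : ℕ) : ℤ) * (X + C ((m - j : ℕ) : ℤ)) ^ (m - 1 - j))) := by
      intro j hj
      rw [Finset.mem_range] at hj
      have e0 : m + 1 - (j + 1) = m - j := by omega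
      have e1 : m - j - 1 = m - 1 - j := by omega
      have e2 : j + 1 - 1 = j := by omega
      have hne : ¬ (m - j = 0) := by omega
      rw [hG]
      simp only [hsm, e0, e1, e2, if_neg hne]
      rw [nsmul_eq_mul, ← C_eq_natCast, Nat.cast_mul, C_mul]
      ring
    rw [Finset.sum_congr rfl hterm, ← Finset.mul_sum, ← Finset.mul_sum]
    ring

end Aux

open Polynomial in
/-- Second partition identity: summing, over all partitions of `{1,...,n}` into `k` blocks,
the product over blocks `τ` of `|τ|^{|τ|-1}` gives `C(n-1,k-1) · n^{n-k}`. -/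
theorem second_partition_identity (n k : ℕ) (hk : 1 ≤ k) (hkn : k ≤ n) :
    ∑ σ ∈ (univ : Finset (Finset (Finset (Fin n)))).filter (fun σ => IsPartitionInto σ k),
      ∏ τ ∈ σ, τ.card ^ (τ.card - 1)
    = (n - 1).choose (k - 1) * n ^ (n - k) := by
  have hn : 0 < n := lt_of_lt_of_le hk hkn
  have key := main_poly (univ : Finset (Fin n))
  have hcard : (univ : Finset (Fin n)).card = n := by simp
  have hne : (univ : Finset (Fin n)) ≠ ∅ := by
    have : Nonempty (Fin n) := ⟨⟨0, hn⟩⟩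
    exact Finset.univ_nonempty.ne_empty
  rw [if_neg hne, hcard] at key
  have hcoeff := congrArg (fun p => Polynomial.coeff p k) key
  simp only [Polynomial.finset_sum_coeff] at hcoeff
  have hL : ∀ σ ∈ partsOf (univ : Finset (Fin n)),
      ((X : Polynomial ℤ)^σ.card * C ((∏ τ ∈ σ, τ.card^(τ.card - 1) : ℕ) : ℤ)).coeff k
        = if σ.card = k then ((∏ τ ∈ σ, τ.card^(τ.card - 1) : ℕ) : ℤ) else 0 := by
    intro σ _
    rw [mul_comm, Polynomial.coeff_C_mul, Polynomial.coeff_X_pow, mul_ite, mul_one, mul_zero]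
    simp [eq_comm]
  have hR : ((X : Polynomial ℤ) * (X + C (n:ℤ))^(n-1)).coeff k
      = (n:ℤ)^(n-k) * ((n - 1).choose (k - 1) : ℤ) := by
    have hk1 : k = (k - 1) + 1 := by omega
    have he : n - 1 - (k - 1) = n - k := by omega
    conv_lhs => rw [hk1]
    rw [Polynomial.coeff_X_mul, Polynomial.coeff_X_add_C_pow, he]
  rw [Finset.sum_congr rfl hL, ← Finset.sum_filter, hR] at hcoeff
  have hfilter : (partsOf (univ : Finset (Fin n))).filter (fun σ => σ.card = k)
      = (univ : Finset (Finset (Finset (Fin n)))).filter (fun σ => IsPartitionInto σ k) := by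
    ext σ
    simp only [mem_filter, mem_partsOf, Finset.mem_univ, true_and, IsPartitionInto]
    exact ⟨fun h => (Finset.mem_filter (p := fun σ => IsPartitionInto σ k)).mpr
        ⟨Finset.mem_univ _, by unfold IsPartitionInto; exact ⟨h.1.1, h.1.2.1, h.1.2.2, h.2⟩⟩,
      fun h => by
        have h' := ((Finset.mem_filter (p := fun σ => IsPartitionInto σ k)).mp h).2
        unfold IsPartitionInto at h'
        exact ⟨⟨h'.1, h'.2.1, h'.2.2.1⟩, h'.2.2.2⟩⟩
  rw [hfilter, mul_comm] at hcoeff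
  exact_mod_cast hcoeff
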